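/- There are group isomorphisms G(0) ≅ G_y, G(1) ≅ yG, G_y(0) ≅ G_y, G_y(1) ≅ yGy, yG(0) ≅ yGy, yG(1) ≅ yG, yGy(0) ≅ yGy and yGy(1) ≅ yGy; in each case, writing s ∈ {0,1} for the relevant one-letter prefix, the isomorphism from the semi-deferred subgroup H(s) to the indicated Lodha–Moore group is given on generators by x_{st} ↦ x_t and y_{st} ↦ y_t. -/
import Mathlib


namespace LodhaMoore

/-- Infinite binary sequences `2^ℕ`. -/
abbrev Seq : Type := ℕ → Bool

/-- The underlying function of the basic bijection `x`:
`00η ↦ 0η`, `01η ↦ 10η`, `1η ↦ 11η` (reading `false` as `0` and `true` as `1`). -/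
def xFun (ξ : Seq) : Seq := fun n =>
  if ξ 0 then
    match n with
    | 0 => true
    | 1 => true
    | n+2 => ξ (n+1)
  else if ξ 1 then
    match n with
    | 0 => true
    | 1 => false
    | n+2 => ξ (n+2)
  else
    match n with
    | 0 => false
    | n+1 => ξ (n+2)

/-- The inverse of `xFun`: `0η ↦ 00η`, `10η ↦ 01η`, `11η ↦ 1η`. -/
def xInv (ξ : Seq) : Seq := fun n =>
  if ξ 0 then
    if ξ 1 then
      match n with
      | 0 => true
      | n+1 => ξ (n+2)
    else
      match n with
      | 0 => false
      | 1 => true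
      | n+2 => ξ (n+2)
  else
    match n with
    | 0 => false
    | 1 => false
    | n+2 => ξ (n+1)

/-- `yAux true n ξ` is the `n`-th bit of `ξ.y`, and `yAux false n ξ` is the `n`-th bit of
`ξ.y⁻¹`, where `y` is defined by `00η ↦ 0(η.y)`, `01η ↦ 10(η.y⁻¹)`, `1η ↦ 11(η.y)`,
so `y⁻¹` is given by `0η ↦ 00(η.y⁻¹)`, `10η ↦ 01(η.y)`, `11η ↦ 1(η.y⁻¹)`. -/
def yAux : Bool → ℕ → Seq → Bool
  | true, 0, ξ => if ξ 0 then true else if ξ 1 then true else false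
  | true, 1, ξ => if ξ 0 then true else if ξ 1 then false
      else yAux true 0 (fun k => ξ (k+2))
  | true, n+2, ξ =>
      if ξ 0 then yAux true n (fun k => ξ (k+1))
      else if ξ 1 then yAux false n (fun k => ξ (k+2))
      else yAux true (n+1) (fun k => ξ (k+2))
  | false, 0, ξ => if ξ 0 then (if ξ 1 then true else false) else false
  | false, 1, ξ => if ξ 0 then (if ξ 1 then yAux false 0 (fun k => ξ (k+2)) else true)
      else false
  | false, n+2, ξ =>
      if ξ 0 then
        (if ξ 1 then yAux false (n+1) (fun k => ξ (k+2))
         else yAux true n (fun k => ξ (k+2)))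
      else yAux false n (fun k => ξ (k+1))

lemma yAux_inv (n : ℕ) :
    ∀ ξ : Seq, (yAux false n (fun k => yAux true k ξ) = ξ n) ∧
      (yAux true n (fun k => yAux false k ξ) = ξ n) := by
  induction n using Nat.strong_induction_on with
  | _ n IH =>
    intro ξ
    constructor
    · cases h0 : ξ 0 <;> cases h1 : ξ 1 <;> rcases n with _ | _ | n <;>
        simp [yAux, h0, h1]
      · have e : (fun k => yAux true (k+1) ξ) = fun k => yAux true k (fun j => ξ (j+2)) :=
          funext fun k => by cases k <;> simp [yAux, h0, h1]
        rw [e]; exact (IH n (by omega) _).1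
      · exact (IH n (by omega) _).2
      · intro h2 h3; simp_all
      · exact (IH (n+1) (by omega) _).1
      · exact (IH (n+1) (by omega) _).1
    · cases h0 : ξ 0 <;> cases h1 : ξ 1 <;> rcases n with _ | _ | n <;>
        simp [yAux, h0, h1]
      · exact (IH (n+1) (by omega) _).2
      · cases h2 : ξ 2 <;> simp [h2]
      · exact (IH (n+1) (by omega) _).2
      · exact (IH n (by omega) _).1
      · have e : (fun k => yAux false (k+1) ξ) = fun k => yAux false k (fun j => ξ (j+2)) :=
          funext fun k => by cases k <;> simp [yAux, h0, h1]
        rw [e]; exact (IH n (by omega) _).2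

/-- The basic bijection `x` of `2^ℕ`. -/
def xPerm : Equiv.Perm Seq where
  toFun := xFun
  invFun := xInv
  left_inv := by
    intro ξ
    funext n
    cases h0 : ξ 0 <;> cases h1 : ξ 1 <;>
      rcases n with _ | _ | n <;>
      simp [xFun, xInv, h0, h1]
  right_inv := by
    intro ξ
    funext n
    cases h0 : ξ 0 <;> cases h1 : ξ 1 <;>
      rcases n with _ | _ | n <;>
      simp [xFun, xInv, h0, h1]

/-- The basic bijection `y` of `2^ℕ`. -/
def yPerm : Equiv.Perm Seq where
  toFun ξ := fun n => yAux true n ξ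
  invFun ξ := fun n => yAux false n ξ
  left_inv ξ := funext fun n => (yAux_inv n ξ).1
  right_inv ξ := funext fun n => (yAux_inv n ξ).2

/-- Prepend a finite word to an infinite sequence. -/
def append (s : List Bool) (ξ : Seq) : Seq := fun n =>
  if h : n < s.length then s.get ⟨n, h⟩ else ξ (n - s.length)

/-- Drop the first `k` letters of an infinite sequence. -/
def dropN (k : ℕ) (ξ : Seq) : Seq := fun n => ξ (n + k)

/-- `hasPrefix s ξ` iff the finite word `s` is a prefix of `ξ`. -/
def hasPrefix (s : List Bool) (ξ : Seq) : Prop := ∀ i : Fin s.length, ξ i = s.get i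

instance (s : List Bool) (ξ : Seq) : Decidable (hasPrefix s ξ) := by
  unfold hasPrefix; infer_instance

lemma hasPrefix_append (s : List Bool) (ξ : Seq) : hasPrefix s (append s ξ) := by
  intro i
  simp [append, i.isLt]

lemma dropN_append (s : List Bool) (ξ : Seq) : dropN s.length (append s ξ) = ξ := by
  funext n
  simp [dropN, append, Nat.not_lt.2 (Nat.le_add_left _ _)]

lemma append_dropN {s : List Bool} {ξ : Seq} (h : hasPrefix s ξ) :
    append s (dropN s.length ξ) = ξ := by
  funext n
  by_cases h' : n < s.length
  · simpa [append, h'] using (h ⟨n, h'⟩).symm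
  · simp [append, h', dropN, Nat.sub_add_cancel (Nat.le_of_not_lt h')]

/-- The bijection of `2^ℕ` acting as the bijection `f` "at the address `s`":
`sη ↦ s(η.f)`, and `ξ ↦ ξ` if `s` is not a prefix of `ξ`. -/
def localize (s : List Bool) (f : Equiv.Perm Seq) : Equiv.Perm Seq where
  toFun ξ := if hasPrefix s ξ then append s (f (dropN s.length ξ)) else ξ
  invFun ξ := if hasPrefix s ξ then append s (f.symm (dropN s.length ξ)) else ξ
  left_inv := by
    intro ξ
    by_cases h : hasPrefix s ξ
    · simp [h, hasPrefix_append, dropN_append, append_dropN h]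
    · simp [h]
  right_inv := by
    intro ξ
    by_cases h : hasPrefix s ξ
    · simp [h, hasPrefix_append, dropN_append, append_dropN h]
    · simp [h]

/-- The group of bijections of `2^ℕ`.  Composition is written so that in a product `g * h`
the factor `g` acts first: bijections act on the right, as in Lodha--Moore's paper. -/
abbrev M : Type := (Equiv.Perm Seq)ᵐᵒᵖ

/-- The generator `x_s`, `s ∈ 2^{<ℕ}` (a finite binary sequence, i.e. a `List Bool`). -/
def px (s : List Bool) : M := MulOpposite.op (localize s xPerm)

/-- The generator `y_s`, `s ∈ 2^{<ℕ}`. -/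
def py (s : List Bool) : M := MulOpposite.op (localize s yPerm)

/-- `t` is a word of the form `0^n`, `n ≥ 0`. -/
def allFalse (t : List Bool) : Prop := ∀ b ∈ t, b = false

/-- `t` is a word of the form `1^n`, `n ≥ 0`. -/
def allTrue (t : List Bool) : Prop := ∀ b ∈ t, b = true

instance (t : List Bool) : Decidable (allFalse t) := by unfold allFalse; infer_instance
instance (t : List Bool) : Decidable (allTrue t) := by unfold allTrue; infer_instance

/-- Addresses allowed for the `y`-generators of the Lodha–Moore group `G`. -/
def gSet : Set (List Bool) := {t | ¬ allFalse t ∧ ¬ allTrue t}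
/-- Addresses allowed for the `y`-generators of the Lodha–Moore group `G_y`. -/
def gySet : Set (List Bool) := {t | ¬ allFalse t}
/-- Addresses allowed for the `y`-generators of the Lodha–Moore group `yG`. -/
def ygSet : Set (List Bool) := {t | ¬ allTrue t}
/-- Addresses allowed for the `y`-generators of the Lodha–Moore group `yGy`. -/
def ygySet : Set (List Bool) := Set.univ

/-- The Lodha–Moore style group with `y`-generators allowed at the addresses in `A`. -/
def LM (A : Set (List Bool)) : Subgroup M :=
  Subgroup.closure (Set.range px ∪ py '' A)

/-- The Lodha–Moore group `G`. -/
def G : Subgroup M := LM gSet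
/-- The Lodha–Moore group `G_y`. -/
def Gy : Subgroup M := LM gySet
/-- The Lodha–Moore group `yG`. -/
def yG : Subgroup M := LM ygSet
/-- The Lodha–Moore group `yGy`. -/
def yGy : Subgroup M := LM ygySet

/-- The semi-deferred subgroup `H(s)` of the Lodha–Moore group `H = LM A`: the subgroup
generated by those generators of `H` whose address has `s` as a prefix. -/
def LMdef (A : Set (List Bool)) (s : List Bool) : Subgroup M :=
  Subgroup.closure ((px '' {t | s <+: t}) ∪ (py '' {t | t ∈ A ∧ s <+: t}))

lemma px_mem (A : Set (List Bool)) (s : List Bool) : px s ∈ LM A :=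
  Subgroup.subset_closure (Or.inl ⟨s, rfl⟩)

lemma py_mem {A : Set (List Bool)} {s : List Bool} (h : s ∈ A) : py s ∈ LM A :=
  Subgroup.subset_closure (Or.inr ⟨s, h, rfl⟩)

lemma px_mem_def (A : Set (List Bool)) {s t : List Bool} (h : s <+: t) :
    px t ∈ LMdef A s :=
  Subgroup.subset_closure (Or.inl ⟨t, h, rfl⟩)

lemma py_mem_def {A : Set (List Bool)} {s t : List Bool} (h1 : t ∈ A) (h2 : s <+: t) :
    py t ∈ LMdef A s :=
  Subgroup.subset_closure (Or.inr ⟨t, ⟨h1, h2⟩, rfl⟩)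

/-- The conjugate subgroup `z B z⁻¹`. -/
def conjSubgroup {H : Type*} [Group H] (z : H) (B : Subgroup H) : Subgroup H :=
  B.map (MulAut.conj z).toMonoidHom

/-- The `MulEquiv` `φ.range ≃* ⊤` used to define an ascending HNN extension. -/
noncomputable def ascEquiv {B : Type*} [Group B] (φ : B →* B) (hφ : Function.Injective φ) :
    (φ.range : Subgroup B) ≃* (⊤ : Subgroup B) :=
  (MonoidHom.ofInjective hφ).symm.trans Subgroup.topEquiv.symm

/-- The ascending HNN extension `B*_{φ,t} = ⟨B, t ∣ t⁻¹ b t = φ(b) for all b ∈ B⟩` of the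
group `B` along the injective endomorphism `φ`.  (In `HNNExtension B φ.range ⊤ (ascEquiv φ hφ)`
the defining relation is exactly `t⁻¹ * of b * t = of (φ b)` for all `b : B`.) -/
noncomputable abbrev AscHNN {B : Type*} [Group B] (φ : B →* B)
    (hφ : Function.Injective φ) : Type _ :=
  HNNExtension B φ.range ⊤ (ascEquiv φ hφ)


/-- There is an isomorphism from the semi-deferred subgroup `(LM A)(b)` (for a one-letter
prefix `b`) to the Lodha–Moore group `LM A'`, given on generators by `x_{bt} ↦ x_t`
and `y_{bt} ↦ y_t`. -/
def DefIso (A A' : Set (List Bool)) (b : Bool) : Prop :=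
  ∃ e : ↥(LMdef A [b]) ≃* ↥(LM A'),
    (∀ t : List Bool, (e ⟨px (b :: t), px_mem_def A ⟨t, rfl⟩⟩ : M) = px t) ∧
    (∀ (t : List Bool) (h1 : (b :: t) ∈ A) (_ : t ∈ A'),
      (e ⟨py (b :: t), py_mem_def h1 ⟨t, rfl⟩⟩ : M) = py t)

/-! ### Auxiliary lemmas for the semi-deferred isomorphisms -/

lemma localize_one (s : List Bool) : localize s (1 : Equiv.Perm Seq) = 1 := by
  apply Equiv.ext
  intro ξ
  by_cases h : hasPrefix s ξ <;> simp [localize, h]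
  exact append_dropN h

lemma localize_mul (s : List Bool) (f g : Equiv.Perm Seq) :
    localize s (f * g) = localize s f * localize s g := by
  apply Equiv.ext
  intro ξ
  by_cases h : hasPrefix s ξ
  · simp [localize, h, hasPrefix_append, dropN_append, Equiv.Perm.mul_apply]
  · simp [localize, h]

lemma localize_injective (s : List Bool) :
    Function.Injective (fun f => localize s f) := by
  intro f g hfg
  apply Equiv.ext
  intro ξ
  have h := congrArg (fun e : Equiv.Perm Seq => e (append s ξ)) hfg
  simp only [localize, Equiv.coe_fn_mk, hasPrefix_append, if_pos, dropN_append] at h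
  have := congrArg (dropN s.length) h
  simpa [dropN_append] using this

lemma hasPrefix_single (b : Bool) (ξ : Seq) : hasPrefix [b] ξ ↔ ξ 0 = b := by
  constructor
  · intro h; exact h ⟨0, by simp⟩
  · intro h i
    have h1 : (i : ℕ) = 0 := Nat.lt_one_iff.mp (by simpa using i.isLt)
    simp [h1, h]

lemma hasPrefix_cons (b : Bool) (t : List Bool) (ξ : Seq) :
    hasPrefix (b :: t) ξ ↔ ξ 0 = b ∧ hasPrefix t (dropN 1 ξ) := by
  constructor
  · intro h
    refine ⟨h ⟨0, by simp⟩, fun i => ?_⟩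
    have := h ⟨(i : ℕ) + 1, by simp [Nat.succ_lt_succ i.isLt]⟩
    simpa [dropN] using this
  · rintro ⟨h0, h1⟩ i
    rcases i with ⟨_ | j, hj⟩
    · simpa using h0
    · have := h1 ⟨j, by simpa using Nat.lt_of_succ_lt_succ hj⟩
      simpa [dropN] using this

lemma dropN_dropN (m k : ℕ) (ξ : Seq) : dropN m (dropN k ξ) = dropN (m + k) ξ := by
  funext n
  simp [dropN, Nat.add_assoc]

lemma append_cons (b : Bool) (s : List Bool) (ξ : Seq) :
    append (b :: s) ξ = append [b] (append s ξ) := by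
  funext n
  rcases n with _ | n
  · simp [append]
  · by_cases h : n < s.length <;>
      simp [append, Nat.succ_lt_succ_iff, h]

lemma localize_cons (b : Bool) (t : List Bool) (f : Equiv.Perm Seq) :
    localize (b :: t) f = localize [b] (localize t f) := by
  apply Equiv.ext
  intro ξ
  show _ = localize [b] (localize t f) ξ
  by_cases h0 : ξ 0 = b
  · have hb : hasPrefix [b] ξ := (hasPrefix_single b ξ).2 h0
    by_cases ht : hasPrefix t (dropN 1 ξ)
    · have hbt : hasPrefix (b :: t) ξ := (hasPrefix_cons b t ξ).2 ⟨h0, ht⟩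
      simp only [localize, Equiv.coe_fn_mk, List.length_singleton, if_pos hbt, if_pos hb,
        if_pos ht]
      rw [append_cons]
      congr 2
    · have hbt : ¬ hasPrefix (b :: t) ξ := fun h => ht ((hasPrefix_cons b t ξ).1 h).2
      simp only [localize, Equiv.coe_fn_mk, List.length_singleton, if_neg hbt, if_pos hb,
        if_neg ht]
      exact (append_dropN (s := [b]) (by simpa using hb)).symm
  · have hb : ¬ hasPrefix [b] ξ := fun h => h0 ((hasPrefix_single b ξ).1 h)
    have hbt : ¬ hasPrefix (b :: t) ξ := fun h => h0 ((hasPrefix_cons b t ξ).1 h).1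
    simp [localize, hb, hbt]

/-- The shift homomorphism `g ↦ g` localized at `[b]`. -/
def psi (b : Bool) : M →* M where
  toFun g := MulOpposite.op (localize [b] g.unop)
  map_one' := by simp [localize_one]
  map_mul' g h := by
    simp only [MulOpposite.unop_mul, localize_mul]
    rfl

lemma psi_injective (b : Bool) : Function.Injective (psi b) := by
  intro g h hgh
  have := localize_injective [b] (MulOpposite.op_injective hgh)
  exact MulOpposite.unop_injective this

lemma psi_px (b : Bool) (t : List Bool) : psi b (px t) = px (b :: t) := by
  show MulOpposite.op (localize [b] ((MulOpposite.op (localize t xPerm)).unop)) =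
    MulOpposite.op (localize (b :: t) xPerm)
  rw [MulOpposite.unop_op, ← localize_cons]

lemma psi_py (b : Bool) (t : List Bool) : psi b (py t) = py (b :: t) := by
  show MulOpposite.op (localize [b] ((MulOpposite.op (localize t yPerm)).unop)) =
    MulOpposite.op (localize (b :: t) yPerm)
  rw [MulOpposite.unop_op, ← localize_cons]

lemma psi_map_LM (A A' : Set (List Bool)) (b : Bool)
    (hA : ∀ t, (b :: t) ∈ A ↔ t ∈ A') :
    (LM A').map (psi b) = LMdef A [b] := by
  rw [LM, MonoidHom.map_closure, LMdef]
  congr 1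
  rw [Set.image_union]
  congr 1
  · ext g
    constructor
    · rintro ⟨-, ⟨t, rfl⟩, rfl⟩
      exact ⟨b :: t, ⟨t, rfl⟩, (psi_px b t).symm⟩
    · rintro ⟨u, ⟨r, rfl⟩, rfl⟩
      exact ⟨px r, ⟨r, rfl⟩, psi_px b r⟩
  · ext g
    constructor
    · rintro ⟨-, ⟨t, ht, rfl⟩, rfl⟩
      exact ⟨b :: t, ⟨(hA t).2 ht, ⟨t, rfl⟩⟩, (psi_py b t).symm⟩
    · rintro ⟨u, ⟨hu, r, rfl⟩, rfl⟩
      exact ⟨py r, ⟨r, (hA r).1 hu, rfl⟩, psi_py b r⟩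

lemma defIso_of (A A' : Set (List Bool)) (b : Bool)
    (hA : ∀ t, (b :: t) ∈ A ↔ t ∈ A') : DefIso A A' b := by
  have hinj := psi_injective b
  have hmap := psi_map_LM A A' b hA
  let e1 : ↥(LM A') ≃* ↥((LM A').map (psi b)) :=
    Subgroup.equivMapOfInjective (LM A') (psi b) hinj
  let e : ↥(LMdef A [b]) ≃* ↥(LM A') :=
    (e1.trans (MulEquiv.subgroupCongr hmap)).symm
  have claim : ∀ (g : M) (hg : g ∈ LM A') (hg' : psi b g ∈ LMdef A [b]),
      (e ⟨psi b g, hg'⟩ : M) = g := by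
    intro g hg hg'
    have h2 : e ⟨psi b g, hg'⟩ = ⟨g, hg⟩ := by
      rw [MulEquiv.symm_apply_eq]
      apply Subtype.ext
      rw [MulEquiv.trans_apply, MulEquiv.subgroupCongr_apply,
        Subgroup.coe_equivMapOfInjective_apply]
    rw [h2]
  refine ⟨e, fun t => ?_, fun t h1 h2 => ?_⟩
  · have hmem : psi b (px t) ∈ LMdef A [b] := by
      rw [psi_px]; exact px_mem_def A ⟨t, rfl⟩
    have : (⟨px (b :: t), px_mem_def A ⟨t, rfl⟩⟩ : ↥(LMdef A [b])) = ⟨psi b (px t), hmem⟩ :=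
      Subtype.ext (psi_px b t).symm
    rw [this, claim (px t) (px_mem A' t) hmem]
  · have hmem : psi b (py t) ∈ LMdef A [b] := by
      rw [psi_py]; exact py_mem_def h1 ⟨t, rfl⟩
    have : (⟨py (b :: t), py_mem_def h1 ⟨t, rfl⟩⟩ : ↥(LMdef A [b])) = ⟨psi b (py t), hmem⟩ :=
      Subtype.ext (psi_py b t).symm
    rw [this, claim (py t) (py_mem h2) hmem]

/-- `G(0) ≅ G_y`, `G(1) ≅ yG`, `G_y(0) ≅ G_y`, `G_y(1) ≅ yGy`, `yG(0) ≅ yGy`,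
`yG(1) ≅ yG`, `yGy(0) ≅ yGy` and `yGy(1) ≅ yGy`, each iso given on generators by
`x_{st} ↦ x_t` and `y_{st} ↦ y_t`. -/
theorem semi_deferred_isomorphisms :
    DefIso gSet gySet false ∧ DefIso gSet ygSet true ∧
    DefIso gySet gySet false ∧ DefIso gySet ygySet true ∧
    DefIso ygSet ygySet false ∧ DefIso ygSet ygSet true ∧
    DefIso ygySet ygySet false ∧ DefIso ygySet ygySet true := by
  refine ⟨defIso_of _ _ _ ?_, defIso_of _ _ _ ?_, defIso_of _ _ _ ?_, defIso_of _ _ _ ?_,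
    defIso_of _ _ _ ?_, defIso_of _ _ _ ?_, defIso_of _ _ _ ?_, defIso_of _ _ _ ?_⟩ <;>
    intro t <;>
    simp [gSet, gySet, ygSet, ygySet, allFalse, allTrue]

end LodhaMoore
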